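/- Let G be a digraph with a global sink. The set of all recurrent chip configurations on G is an abelian group under the operation (σ, σ') ↦ (σ + σ')°, and this group is isomorphic, via the map sending a recurrent configuration to its equivalence class, to the sandpile group S(G) = ℤ^{n−1}/ℤ^{n−1}Δ'(G). -/

import Mathlib

/-!
The recurrent chip configurations form an abelian group under `(σ, σ') ↦ (σ + σ')°`,
isomorphic to the sandpile group `ℤ^{n-1}/ℤ^{n-1}Δ'(G)` via the map sending a
recurrent configuration to its equivalence class (Holroyd et al., Corollary 2.16).
-/

def outdeg {V E : Type} [Fintype E] [DecidableEq V] (tail : E → V) (v : V) : ℕ :=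
  (Finset.univ.filter (fun e => tail e = v)).card

/-- The number of edges from `v` to `w`. -/
def numEdges {V E : Type} [Fintype E] [DecidableEq V] (tail head : E → V) (v w : V) : ℕ :=
  (Finset.univ.filter (fun e => tail e = v ∧ head e = w)).card

/-- The vertices other than the (global) sink `s`. -/
abbrev Vne {V : Type} (s : V) : Type := {v : V // v ≠ s}

/-- Firing the vertex `v`. -/
def fire {V E : Type} [Fintype E] [DecidableEq V] {s : V} (tail head : E → V)
    (σ : Vne s → ℕ) (v : Vne s) : Vne s → ℕ :=
  fun w =>
    if w = v then σ v + numEdges tail head v.1 v.1 - outdeg tail v.1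
    else σ w + numEdges tail head v.1 w.1

/-- A (non-sink) vertex is active when it has at least as many chips as outgoing edges. -/
def Active {V E : Type} [Fintype E] [DecidableEq V] {s : V} (tail : E → V)
    (σ : Vne s → ℕ) (v : Vne s) : Prop :=
  outdeg tail v.1 ≤ σ v

/-- The result of firing the vertices in the list `l` in order, starting from `σ`. -/
def fireList {V E : Type} [Fintype E] [DecidableEq V] {s : V} (tail head : E → V)
    (σ : Vne s → ℕ) : List (Vne s) → (Vne s → ℕ)
  | [] => σ
  | v :: l => fireList tail head (fire tail head σ v) l

/-- The firing sequence `l` is legal from `σ`. -/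
def Legal {V E : Type} [Fintype E] [DecidableEq V] {s : V} (tail head : E → V)
    (σ : Vne s → ℕ) : List (Vne s) → Prop
  | [] => True
  | v :: l => Active tail σ v ∧ Legal tail head (fire tail head σ v) l

/-- A configuration is stable when no non-sink vertex is active. -/
def Stable {V E : Type} [Fintype E] [DecidableEq V] {s : V} (tail : E → V)
    (σ : Vne s → ℕ) : Prop :=
  ∀ v, σ v < outdeg tail v.1

/-- `σ` is accessible: from any chip configuration `ζ` one can obtain `σ` by adding
some chips and then performing a legal sequence of firings of active vertices. -/
def Accessible {V E : Type} [Fintype E] [DecidableEq V] {s : V} (tail head : E → V)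
    (σ : Vne s → ℕ) : Prop :=
  ∀ ζ : Vne s → ℕ, ∃ (β : Vne s → ℕ) (l : List (Vne s)),
    Legal tail head (fun v => ζ v + β v) l ∧ fireList tail head (fun v => ζ v + β v) l = σ

/-- A chip configuration is recurrent when it is both stable and accessible. -/
def Recurrent {V E : Type} [Fintype E] [DecidableEq V] {s : V} (tail head : E → V)
    (σ : Vne s → ℕ) : Prop :=
  Stable tail σ ∧ Accessible tail head σ

/-- The reduced Laplacian of the digraph. -/
def reducedLaplacian {V E : Type} [Fintype E] [DecidableEq V] (tail head : E → V)
    (s : V) : Matrix (Vne s) (Vne s) ℤ :=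
  fun i j => (if i = j then (outdeg tail i.1 : ℤ) else 0) - (numEdges tail head i.1 j.1 : ℤ)

/-- The integer row span of the reduced Laplacian. -/
def rowSpan {V E : Type} [Fintype E] [DecidableEq V] (tail head : E → V) (s : V) :
    Submodule ℤ (Vne s → ℤ) :=
  Submodule.span ℤ (Set.range (fun i => reducedLaplacian tail head s i))

/-- `τ` is the stabilization `σ°` of `σ`. -/
def StabilizesTo {V E : Type} [Fintype E] [DecidableEq V] {s : V} (tail head : E → V)
    (σ τ : Vne s → ℕ) : Prop :=
  ∃ l, Legal tail head σ l ∧ fireList tail head σ l = τ ∧ Stable tail τ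

/-- The sandpile group `S(G) = ℤ^{n-1} / ℤ^{n-1} Δ'(G)`. -/
abbrev SandpileGroup {V E : Type} [Fintype E] [DecidableEq V] (tail head : E → V)
    (s : V) : Type :=
  (Vne s → ℤ) ⧸ rowSpan tail head s

/-- The natural map sending a chip configuration to its class in the sandpile group. -/
def toClass {V E : Type} [Fintype E] [DecidableEq V] (tail head : E → V) (s : V)
    (σ : Vne s → ℕ) : SandpileGroup tail head s :=
  Submodule.Quotient.mk (fun v => (σ v : ℤ))

set_option linter.unusedSectionVars false
set_option linter.unusedVariables false

section Aux
variable {V E : Type} [Fintype V] [DecidableEq V] [Fintype E]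
variable (tail head : E → V) (s : V)

private def rsum (c : Vne s → ℤ) : Vne s → ℤ :=
  fun w => ∑ y, c y * reducedLaplacian tail head s y w

private lemma rsum_add (c d : Vne s → ℤ) (w : Vne s) :
    rsum tail head s (fun y => c y + d y) w = rsum tail head s c w + rsum tail head s d w := by
  simp [rsum, add_mul, Finset.sum_add_distrib]

private lemma rsum_single (x : Vne s) (w : Vne s) :
    rsum tail head s (fun y => if y = x then 1 else 0) w = reducedLaplacian tail head s x w := by
  simp [rsum, ite_mul]

private lemma fire_int {σ : Vne s → ℕ} {v : Vne s} (hv : Active tail σ v) (w : Vne s) :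
    ((fire tail head σ v w : ℕ) : ℤ) = (σ w : ℤ) - reducedLaplacian tail head s v w := by
  unfold fire reducedLaplacian
  by_cases h : w = v
  · subst h
    have h1 : outdeg tail w.1 ≤ σ w + numEdges tail head w.1 w.1 :=
      le_trans hv (Nat.le_add_right _ _)
    simp only [if_pos rfl]
    push_cast [h1]
    ring
  · have h2 : v ≠ w := Ne.symm h
    simp only [if_neg h, if_neg h2]
    push_cast
    ring

private lemma fireList_int {l : List (Vne s)} {σ : Vne s → ℕ} (h : Legal tail head σ l)
    (w : Vne s) :
    ((fireList tail head σ l w : ℕ) : ℤ)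
      = (σ w : ℤ) - rsum tail head s (fun y => (l.count y : ℤ)) w := by
  induction l generalizing σ with
  | nil => simp [fireList, rsum]
  | cons x l ih =>
      rw [Legal] at h
      rw [fireList, ih h.2, fire_int tail head s h.1 w]
      have hc : (fun y => ((List.count y (x :: l) : ℕ) : ℤ))
          = fun y => (if y = x then (1:ℤ) else 0) + (l.count y : ℤ) := by
        funext y
        rw [List.count_cons]
        by_cases hxy : y = x
        · simp [hxy]; ring
        · simp [hxy, Ne.symm hxy]; exact fun h => hxy (Subtype.ext h).symm
      rw [hc, rsum_add, rsum_single]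
      ring

private lemma rsum_sub_single (c : Vne s → ℤ) (x : Vne s) (w : Vne s) :
    rsum tail head s (fun y => c y - if y = x then 1 else 0) w
      = rsum tail head s c w - reducedLaplacian tail head s x w := by
  simp [rsum, sub_mul, Finset.sum_sub_distrib, ite_mul]

private lemma lap {l : List (Vne s)} {σ : Vne s → ℕ} {c : Vne s → ℤ}
    (hl : Legal tail head σ l) (hc : ∀ y, 0 ≤ c y)
    (hstab : ∀ w, (σ w : ℤ) - rsum tail head s c w < (outdeg tail w.1 : ℤ)) :
    ∀ w, (l.count w : ℤ) ≤ c w := by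
  induction l generalizing σ c with
  | nil => intro w; simpa using hc w
  | cons x l ih =>
      rw [Legal] at hl
      have hx1 : 1 ≤ c x := by
        by_contra hlt
        have hcx : c x = 0 := le_antisymm (by linarith) (hc x)
        have hrs : rsum tail head s c x ≤ 0 := by
          apply Finset.sum_nonpos
          intro y _
          by_cases hyx : y = x
          · subst hyx; rw [hcx]; simp
          · have hrow : reducedLaplacian tail head s y x ≤ 0 := by
              unfold reducedLaplacian
              rw [if_neg hyx]
              simp
            exact mul_nonpos_iff.mpr (Or.inl ⟨hc y, hrow⟩)
        have h1 := hstab x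
        have hact : (outdeg tail x.1 : ℤ) ≤ (σ x : ℤ) := by exact_mod_cast hl.1
        linarith
      have key := ih (σ := fire tail head σ x)
        (c := fun y => c y - if y = x then 1 else 0) hl.2 ?_ ?_
      · intro w
        have hk := key w
        by_cases hwx : w = x
        · subst hwx
          rw [if_pos rfl] at hk
          rw [List.count_cons_self]
          push_cast
          linarith
        · rw [if_neg hwx] at hk
          rw [List.count_cons_of_ne (Ne.symm hwx)]
          linarith
      · intro y
        by_cases hyx : y = x
        · subst hyx; simp; linarith
        · simp [hyx]; exact hc y
      · intro w
        rw [rsum_sub_single, fire_int tail head s hl.1 w]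
        have := hstab w
        linarith

private lemma add_aux {l : List (Vne s)} {σ : Vne s → ℕ} (hl : Legal tail head σ l)
    (γ : Vne s → ℕ) :
    Legal tail head (fun v => σ v + γ v) l ∧
      fireList tail head (fun v => σ v + γ v) l
        = fun v => fireList tail head σ l v + γ v := by
  induction l generalizing σ with
  | nil => exact ⟨trivial, rfl⟩
  | cons x l ih =>
      rw [Legal] at hl
      have hact : Active tail (fun v => σ v + γ v) x :=
        le_trans hl.1 (Nat.le_add_right _ _)
      have hd : outdeg tail x.1 ≤ σ x + numEdges tail head x.1 x.1 :=
        le_trans hl.1 (Nat.le_add_right _ _)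
      have hfire : fire tail head (fun v => σ v + γ v) x
          = fun v => fire tail head σ x v + γ v := by
        funext w
        unfold fire
        by_cases h : w = x
        · subst h
          rw [if_pos rfl, if_pos rfl]
          beta_reduce
          omega
        · simp only [if_neg h]
          ring
      have hih := ih (σ := fire tail head σ x) hl.2
      constructor
      · rw [Legal]
        exact ⟨hact, by rw [hfire]; exact hih.1⟩
      · rw [fireList, hfire, hih.2, fireList]

private lemma fireList_append (σ : Vne s → ℕ) (l₁ l₂ : List (Vne s)) :
    fireList tail head σ (l₁ ++ l₂) = fireList tail head (fireList tail head σ l₁) l₂ := by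
  induction l₁ generalizing σ with
  | nil => rfl
  | cons x l ih => rw [List.cons_append, fireList, fireList, ih]

private lemma legal_append {σ : Vne s → ℕ} {l₁ l₂ : List (Vne s)}
    (h₁ : Legal tail head σ l₁) (h₂ : Legal tail head (fireList tail head σ l₁) l₂) :
    Legal tail head σ (l₁ ++ l₂) := by
  induction l₁ generalizing σ with
  | nil => exact h₂
  | cons x l ih =>
      rw [Legal] at h₁
      rw [List.cons_append, Legal]
      exact ⟨h₁.1, ih h₁.2 (by rw [← fireList]; exact h₂)⟩

private lemma le_fireList_of_not_mem {l : List (Vne s)} {σ : Vne s → ℕ} {v : Vne s}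
    (h : v ∉ l) : σ v ≤ fireList tail head σ l v := by
  induction l generalizing σ with
  | nil => exact le_refl _
  | cons x l ih =>
      have hvx : v ≠ x := fun hh => h (by simp [hh])
      have h2 : v ∉ l := fun hh => h (by simp [hh])
      refine le_trans ?_ (ih h2)
      unfold fire
      rw [if_neg hvx]
      exact Nat.le_add_right _ _

private lemma outdeg_eq_sum (v : V) :
    outdeg tail v = ∑ w : V, numEdges tail head v w := by
  unfold outdeg numEdges
  rw [Finset.card_eq_sum_card_fiberwise (f := head) (t := Finset.univ)
    (fun x _ => Finset.mem_univ _)]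
  apply Finset.sum_congr rfl
  intro w _
  rw [Finset.filter_filter]

private lemma outdeg_split (v : V) :
    outdeg tail v = numEdges tail head v s + ∑ w : Vne s, numEdges tail head v w.1 := by
  rw [outdeg_eq_sum tail head v, ← Finset.add_sum_erase _ _ (Finset.mem_univ s)]
  congr 1
  rw [Finset.sum_subtype (p := fun x => x ≠ s) (Finset.univ.erase s)
    (fun x => by simp) (fun w => numEdges tail head v w)]

private lemma sum_row (y : Vne s) :
    ∑ w : Vne s, reducedLaplacian tail head s y w = (numEdges tail head y.1 s : ℤ) := by
  unfold reducedLaplacian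
  rw [Finset.sum_sub_distrib]
  rw [Finset.sum_ite_eq Finset.univ y (fun _ => (outdeg tail y.1 : ℤ))]
  have h := outdeg_split tail head s y.1
  have h2 : ((outdeg tail y.1 : ℕ) : ℤ)
      = (numEdges tail head y.1 s : ℤ) + ∑ w : Vne s, (numEdges tail head y.1 w.1 : ℤ) := by
    rw [h]; push_cast; ring
  simp only [Finset.mem_univ, if_pos]
  rw [h2]
  ring

private lemma sum_rsum (c : Vne s → ℤ) :
    ∑ w : Vne s, rsum tail head s c w
      = ∑ y : Vne s, c y * (numEdges tail head y.1 s : ℤ) := by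
  unfold rsum
  rw [Finset.sum_comm]
  apply Finset.sum_congr rfl
  intro y _
  rw [← Finset.mul_sum, sum_row]

private lemma rsum_apply (c : Vne s → ℤ) (w : Vne s) :
    rsum tail head s c w = c w * (outdeg tail w.1 : ℤ)
      - ∑ y, c y * (numEdges tail head y.1 w.1 : ℤ) := by
  unfold rsum reducedLaplacian
  simp only [mul_sub, Finset.sum_sub_distrib, mul_ite, mul_zero]
  rw [Finset.sum_ite_eq' Finset.univ w (fun y => c y * (outdeg tail y.1 : ℤ))]
  simp


private lemma sum_fireList {l : List (Vne s)} {σ : Vne s → ℕ} (h : Legal tail head σ l) :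
    ∑ w : Vne s, ((fireList tail head σ l w : ℕ) : ℤ)
      = (∑ w : Vne s, (σ w : ℤ))
        - ∑ y : Vne s, (l.count y : ℤ) * (numEdges tail head y.1 s : ℤ) := by
  rw [← sum_rsum, ← Finset.sum_sub_distrib]
  apply Finset.sum_congr rfl
  intro w _
  exact fireList_int tail head s h w

private lemma sink_bound {l : List (Vne s)} {σ : Vne s → ℕ} (h : Legal tail head σ l)
    (y : Vne s) :
    (l.count y : ℤ) * (numEdges tail head y.1 s : ℤ) ≤ ∑ w : Vne s, (σ w : ℤ) := by
  have h1 := sum_fireList tail head s h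
  have h2 : (0:ℤ) ≤ ∑ w : Vne s, ((fireList tail head σ l w : ℕ) : ℤ) :=
    Finset.sum_nonneg fun w _ => Int.ofNat_nonneg _
  have h3 : (l.count y : ℤ) * (numEdges tail head y.1 s : ℤ)
      ≤ ∑ z : Vne s, (l.count z : ℤ) * (numEdges tail head z.1 s : ℤ) :=
    Finset.single_le_sum (fun i _ => mul_nonneg (Int.ofNat_nonneg _) (Int.ofNat_nonneg _))
      (Finset.mem_univ y)
  linarith

private lemma inflow_bound {l : List (Vne s)} {σ : Vne s → ℕ} (h : Legal tail head σ l)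
    {v w : Vne s} (hvw : v ≠ w) :
    (l.count v : ℤ) * (numEdges tail head v.1 w.1 : ℤ)
      ≤ (∑ u : Vne s, (σ u : ℤ)) + (l.count w : ℤ) * (outdeg tail w.1 : ℤ) := by
  have h1 := fireList_int tail head s h w
  rw [rsum_apply] at h1
  have hsum := sum_fireList tail head s h
  have hf : ((fireList tail head σ l w : ℕ) : ℤ)
      ≤ ∑ u : Vne s, ((fireList tail head σ l u : ℕ) : ℤ) :=
    Finset.single_le_sum (fun i _ => Int.ofNat_nonneg _) (Finset.mem_univ w)
  have hs : (0:ℤ) ≤ ∑ y : Vne s, (l.count y : ℤ) * (numEdges tail head y.1 s : ℤ) :=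
    Finset.sum_nonneg fun i _ => mul_nonneg (Int.ofNat_nonneg _) (Int.ofNat_nonneg _)
  have h3 : (σ w : ℤ) ≤ ∑ u : Vne s, (σ u : ℤ) :=
    Finset.single_le_sum (fun i _ => Int.ofNat_nonneg _) (Finset.mem_univ w)
  have h4 : (l.count v : ℤ) * (numEdges tail head v.1 w.1 : ℤ)
      ≤ ∑ y : Vne s, (l.count y : ℤ) * (numEdges tail head y.1 w.1 : ℤ) :=
    Finset.single_le_sum (fun i _ => mul_nonneg (Int.ofNat_nonneg _) (Int.ofNat_nonneg _))
      (Finset.mem_univ v)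
  linarith

private lemma numEdges_pos {a b : V} (e : E) (h1 : tail e = a) (h2 : head e = b) :
    1 ≤ numEdges tail head a b := by
  have he : e ∈ Finset.univ.filter (fun e => tail e = a ∧ head e = b) := by
    simp [h1, h2]
  exact Finset.card_pos.mpr ⟨e, he⟩

private lemma count_bound
    (hglobal : ∀ v : V,
      Relation.ReflTransGen (fun a b => ∃ e, tail e = a ∧ head e = b) v s)
    (v : Vne s) :
    ∃ B : ℕ, ∀ (σ : Vne s → ℕ) (l : List (Vne s)), Legal tail head σ l →
      (l.count v : ℤ) ≤ (B : ℤ) * ((∑ w : Vne s, (σ w : ℤ)) + 1) := by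
  obtain ⟨u, hu⟩ := v
  have H : ∀ (a : V), Relation.ReflTransGen (fun a b => ∃ e, tail e = a ∧ head e = b) a s →
      ∀ (ha : a ≠ s), ∃ B : ℕ, ∀ (σ : Vne s → ℕ) (l : List (Vne s)), Legal tail head σ l →
        (l.count ⟨a, ha⟩ : ℤ) ≤ (B : ℤ) * ((∑ w : Vne s, (σ w : ℤ)) + 1) := by
    intro a hrel
    induction hrel using Relation.ReflTransGen.head_induction_on with
    | refl => intro ha; exact absurd rfl ha
    | @head a c h' hrel ih =>
        intro ha
        by_cases hcs : c = s
        · obtain ⟨e, he1, he2⟩ := h'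
          rw [hcs] at he2
          refine ⟨1, fun σ l hl => ?_⟩
          have hA : (1:ℤ) ≤ ((numEdges tail head a s : ℕ) : ℤ) := by
            exact_mod_cast numEdges_pos tail head e he1 he2
          have h1 := sink_bound tail head s hl ⟨a, ha⟩
          dsimp only at h1
          have hcnt : (0:ℤ) ≤ (l.count ⟨a, ha⟩ : ℤ) := Int.ofNat_nonneg _
          have hT : (0:ℤ) ≤ ∑ w : Vne s, (σ w : ℤ) :=
            Finset.sum_nonneg fun _ _ => Int.ofNat_nonneg _
          have h5 : (l.count ⟨a, ha⟩ : ℤ) * 1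
              ≤ (l.count ⟨a, ha⟩ : ℤ) * ((numEdges tail head a s : ℕ) : ℤ) :=
            mul_le_mul_of_nonneg_left hA hcnt
          push_cast
          linarith
        · obtain ⟨Bc, hBc⟩ := ih hcs
          by_cases hac : a = c
          · subst hac
            exact ⟨Bc, hBc⟩
          · obtain ⟨e, he1, he2⟩ := h'
            refine ⟨1 + outdeg tail c * Bc, fun σ l hl => ?_⟩
            have hA : (1:ℤ) ≤ ((numEdges tail head a c : ℕ) : ℤ) := by
              exact_mod_cast numEdges_pos tail head e he1 he2
            have hvw : (⟨a, ha⟩ : Vne s) ≠ ⟨c, hcs⟩ := by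
              simp only [ne_eq, Subtype.mk.injEq]
              exact hac
            have h1 := inflow_bound tail head s hl hvw
            dsimp only at h1
            have h2 := hBc σ l hl
            have hT : (0:ℤ) ≤ ∑ w : Vne s, (σ w : ℤ) :=
              Finset.sum_nonneg fun _ _ => Int.ofNat_nonneg _
            have hcnt : (0:ℤ) ≤ (l.count ⟨a, ha⟩ : ℤ) := Int.ofNat_nonneg _
            have hd : (0:ℤ) ≤ ((outdeg tail c : ℕ) : ℤ) := Int.ofNat_nonneg _
            have h5 : (l.count ⟨a, ha⟩ : ℤ) * 1
                ≤ (l.count ⟨a, ha⟩ : ℤ) * ((numEdges tail head a c : ℕ) : ℤ) :=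
              mul_le_mul_of_nonneg_left hA hcnt
            have h6 : (l.count ⟨c, hcs⟩ : ℤ) * ((outdeg tail c : ℕ) : ℤ)
                ≤ ((Bc : ℤ) * ((∑ w : Vne s, (σ w : ℤ)) + 1)) * ((outdeg tail c : ℕ) : ℤ) :=
              mul_le_mul_of_nonneg_right h2 hd
            push_cast
            nlinarith
  exact H u (hglobal u) hu

private lemma length_eq_sum_count {α : Type} [Fintype α] [DecidableEq α] [BEq α] [LawfulBEq α] (l : List α) :
    (l.length : ℤ) = ∑ a : α, (l.count a : ℤ) := by
  induction l with
  | nil => simp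
  | cons x l ih =>
      have hc : ∀ a : α, ((x :: l).count a : ℤ) = (l.count a : ℤ) + (if a = x then 1 else 0) := by
        intro a
        by_cases h : a = x
        · subst h; rw [List.count_cons_self]; push_cast; simp
        · rw [List.count_cons_of_ne (Ne.symm h)]; simp [h]
      simp only [hc]
      rw [Finset.sum_add_distrib, ← ih,
        Finset.sum_ite_eq' Finset.univ x (fun _ => (1:ℤ))]
      simp [List.length_cons]

private lemma exists_stab_of_bound : ∀ (N : ℕ) (σ : Vne s → ℕ),
    (∀ l, Legal tail head σ l → l.length < N) →
    ∃ τ, StabilizesTo tail head σ τ := by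
  intro N
  induction N with
  | zero =>
      intro σ h
      exact absurd (h [] trivial) (by simp)
  | succ N ih =>
      intro σ h
      by_cases hst : Stable tail σ
      · exact ⟨σ, [], trivial, rfl, hst⟩
      · have hex : ∃ v, Active tail σ v := by
          unfold Stable at hst
          push_neg at hst
          obtain ⟨v, hv⟩ := hst
          exact ⟨v, hv⟩
        obtain ⟨v, hv⟩ := hex
        have h' : ∀ l, Legal tail head (fire tail head σ v) l → l.length < N := by
          intro l hl
          have hcons : Legal tail head σ (v :: l) := by
            rw [Legal]; exact ⟨hv, hl⟩
          have := h (v :: l) hcons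
          simp only [List.length_cons] at this
          omega
        obtain ⟨τ, l, hleg, hfl, hstab⟩ := ih _ h'
        exact ⟨τ, v :: l, (by rw [Legal]; exact ⟨hv, hleg⟩), hfl, hstab⟩

private lemma exists_stabilization
    (hglobal : ∀ v : V,
      Relation.ReflTransGen (fun a b => ∃ e, tail e = a ∧ head e = b) v s)
    (σ : Vne s → ℕ) : ∃ τ, StabilizesTo tail head σ τ := by
  choose B hB using fun v : Vne s => count_bound tail head s hglobal v
  have hT0 : (0:ℤ) ≤ ∑ w : Vne s, (σ w : ℤ) :=
    Finset.sum_nonneg fun _ _ => Int.ofNat_nonneg _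
  refine exists_stab_of_bound tail head s
    (((∑ v : Vne s, (B v : ℤ)) * ((∑ w : Vne s, (σ w : ℤ)) + 1)).toNat + 1) σ ?_
  intro l hl
  have hlen : (l.length : ℤ) = ∑ a : Vne s, (l.count a : ℤ) := length_eq_sum_count l
  have h1 : (l.length : ℤ) ≤ (∑ v : Vne s, (B v : ℤ)) * ((∑ w : Vne s, (σ w : ℤ)) + 1) := by
    rw [hlen, Finset.sum_mul]
    exact Finset.sum_le_sum fun v _ => hB v σ l hl
  have h2 : (l.length : ℤ)
      ≤ ((((∑ v : Vne s, (B v : ℤ)) * ((∑ w : Vne s, (σ w : ℤ)) + 1)).toNat : ℕ) : ℤ) :=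
    le_trans h1 (Int.self_le_toNat _)
  have h3 : l.length ≤ (((∑ v : Vne s, (B v : ℤ)) * ((∑ w : Vne s, (σ w : ℤ)) + 1)).toNat : ℕ) := by
    exact_mod_cast h2
  omega


private lemma rsum_neg (c : Vne s → ℤ) (w : Vne s) :
    rsum tail head s (fun y => -(c y)) w = -(rsum tail head s c w) := by
  simp [rsum, neg_mul, Finset.sum_neg_distrib]

private lemma rsum_mem_rowSpan (c : Vne s → ℤ) :
    rsum tail head s c ∈ rowSpan tail head s := by
  have h : rsum tail head s c = ∑ y : Vne s, c y • (reducedLaplacian tail head s y) := by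
    funext w
    rw [Finset.sum_apply]
    rfl
  rw [h]
  exact Submodule.sum_mem _ fun y _ =>
    Submodule.smul_mem _ _ (Submodule.subset_span ⟨y, rfl⟩)

private lemma toClass_eq_of_legal {σ : Vne s → ℕ} {l : List (Vne s)}
    (h : Legal tail head σ l) :
    toClass tail head s (fireList tail head σ l) = toClass tail head s σ := by
  unfold toClass
  rw [Submodule.Quotient.eq]
  have hh : (fun v => ((fireList tail head σ l v : ℕ) : ℤ)) - (fun v => (σ v : ℤ))
      = -(rsum tail head s (fun y => (l.count y : ℤ))) := by
    funext v
    have := fireList_int tail head s h v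
    simp only [Pi.sub_apply, Pi.neg_apply]
    linarith
  rw [hh]
  exact Submodule.neg_mem _ (rsum_mem_rowSpan tail head s _)

private lemma q_exists {σ : Vne s → ℕ} (hrec : Recurrent tail head σ) :
    ∃ (q : Vne s → ℕ) (l : List (Vne s)),
      Legal tail head (fun v => σ v + q v) l ∧
      fireList tail head (fun v => σ v + q v) l = σ ∧
      (∀ v, 1 ≤ l.count v) ∧
      (∀ w, (q w : ℤ) = rsum tail head s (fun y => (l.count y : ℤ)) w) := by
  obtain ⟨hstable, hacc⟩ := hrec
  obtain ⟨β, l, hleg, hfl⟩ := hacc (fun v => σ v + outdeg tail v.1)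
  have hconf : (fun v => (σ v + outdeg tail v.1) + β v)
      = fun v => σ v + (outdeg tail v.1 + β v) := by
    funext v; ring
  rw [hconf] at hleg hfl
  refine ⟨fun v => outdeg tail v.1 + β v, l, hleg, hfl, ?_, ?_⟩
  · intro v
    by_contra hcv
    have hc0 : l.count v = 0 := by omega
    have hnm : v ∉ l := List.count_eq_zero.mp hc0
    have hle := le_fireList_of_not_mem tail head s (σ := fun v => σ v + (outdeg tail v.1 + β v)) hnm
    rw [hfl] at hle
    have := hstable v
    omega
  · intro w
    have h1 := fireList_int tail head s hleg w
    rw [hfl] at h1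
    push_cast at h1
    beta_reduce
    push_cast
    linarith

private lemma iterate_legal {σ q : Vne s → ℕ} {l : List (Vne s)}
    (hleg : Legal tail head (fun v => σ v + q v) l)
    (hfl : fireList tail head (fun v => σ v + q v) l = σ) :
    ∀ k : ℕ, ∃ L : List (Vne s),
      Legal tail head (fun v => σ v + k * q v) L ∧
      fireList tail head (fun v => σ v + k * q v) L = σ ∧
      ∀ v, L.count v = k * l.count v := by
  intro k
  induction k with
  | zero =>
      refine ⟨[], ?_, ?_, by simp⟩
      · exact trivial
      · show (fun v => σ v + 0 * q v) = σ
        funext v; simp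
  | succ k ih =>
      obtain ⟨L, hL, hLf, hLc⟩ := ih
      have hadd := add_aux tail head s hleg (fun v => k * q v)
      have hconf : (fun v => σ v + (k+1) * q v)
          = fun v => (σ v + q v) + k * q v := by
        funext v; ring
      have hmid : fireList tail head (fun v => (σ v + q v) + k * q v) l
          = fun v => σ v + k * q v := by
        rw [hadd.2]
        funext v
        rw [hfl]
      refine ⟨l ++ L, ?_, ?_, ?_⟩
      · rw [hconf]
        exact legal_append tail head s hadd.1 (by rw [hmid]; exact hL)
      · rw [hconf, fireList_append, hmid, hLf]
      · intro v
        rw [List.count_append, hLc v]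
        ring

private lemma diff_nonneg {σ₁ σ₂ : Vne s → ℕ} (h1 : Recurrent tail head σ₁)
    (h2 : Stable tail σ₂) (c : Vne s → ℤ)
    (hc : ∀ w, (σ₁ w : ℤ) - (σ₂ w : ℤ) = rsum tail head s c w) :
    ∀ w, 0 ≤ c w := by
  obtain ⟨q, l, hleg, hfl, hcnt, hq⟩ := q_exists tail head s h1
  set k : ℕ := Finset.univ.sup (fun y : Vne s => (-(c y)).toNat) with hk
  have hkc : ∀ y : Vne s, 0 ≤ (k : ℤ) * (l.count y : ℤ) + c y := by
    intro y
    have ha : (-(c y)).toNat ≤ k := by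
      rw [hk]; exact Finset.le_sup (f := fun y : Vne s => (-(c y)).toNat) (Finset.mem_univ y)
    have hb : -(c y) ≤ ((-(c y)).toNat : ℤ) := Int.self_le_toNat _
    have h3 : (1:ℤ) ≤ (l.count y : ℤ) := by exact_mod_cast hcnt y
    have hk0 : (0:ℤ) ≤ (k:ℤ) := Int.ofNat_nonneg _
    have ha' : (((-(c y)).toNat : ℕ) : ℤ) ≤ (k:ℤ) := by exact_mod_cast ha
    nlinarith
  obtain ⟨L, hL, hLf, hLc⟩ := iterate_legal tail head s hleg hfl k
  have hstab : ∀ w : Vne s, ((fun v => σ₁ v + k * q v) w : ℤ)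
      - rsum tail head s (fun y => (k : ℤ) * (l.count y : ℤ) + c y) w
      < (outdeg tail w.1 : ℤ) := by
    intro w
    have hr : rsum tail head s (fun y => (k:ℤ) * (l.count y : ℤ) + c y) w
        = (k:ℤ) * rsum tail head s (fun y => ((l.count y : ℕ) : ℤ)) w
          + rsum tail head s c w := by
      unfold rsum
      rw [Finset.mul_sum, ← Finset.sum_add_distrib]
      apply Finset.sum_congr rfl
      intro y _
      ring
    have hσ2 := h2 w
    have hσ2' : ((σ₂ w : ℕ) : ℤ) < ((outdeg tail w.1 : ℕ) : ℤ) := by exact_mod_cast hσ2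
    have hqw := hq w
    have hcw := hc w
    have hqk : (k:ℤ) * ((q w : ℕ) : ℤ)
        = (k:ℤ) * rsum tail head s (fun y => ((l.count y : ℕ) : ℤ)) w := by
      rw [hqw]
    beta_reduce
    push_cast
    rw [hr]
    linarith
  have hlap := lap tail head s hL hkc hstab
  intro w
  have h5 := hlap w
  have hLcw : ((L.count w : ℕ) : ℤ) = (k:ℤ) * ((l.count w : ℕ) : ℤ) := by
    exact_mod_cast hLc w
  rw [hLcw] at h5
  linarith

private lemma recurrent_inj {σ₁ σ₂ : Vne s → ℕ} (h1 : Recurrent tail head σ₁)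
    (h2 : Recurrent tail head σ₂)
    (hcls : toClass tail head s σ₁ = toClass tail head s σ₂) : σ₁ = σ₂ := by
  unfold toClass at hcls
  rw [Submodule.Quotient.eq] at hcls
  rw [rowSpan] at hcls
  obtain ⟨c, hcrep⟩ := (Submodule.mem_span_range_iff_exists_fun ℤ).mp hcls
  have hc : ∀ w, (σ₁ w : ℤ) - (σ₂ w : ℤ) = rsum tail head s c w := by
    intro w
    have := congrFun hcrep w
    rw [Finset.sum_apply] at this
    simp only [Pi.sub_apply] at this
    rw [← this]
    rfl
  have hpos := diff_nonneg tail head s h1 h2.1 c hc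
  have hc' : ∀ w, (σ₂ w : ℤ) - (σ₁ w : ℤ) = rsum tail head s (fun y => -(c y)) w := by
    intro w
    rw [rsum_neg]
    linarith [hc w]
  have hneg := diff_nonneg tail head s h2 h1.1 (fun y => -(c y)) hc'
  have hzero : ∀ w, c w = 0 := by
    intro w
    have := hneg w
    have := hpos w
    omega
  funext v
  have h6 := hc v
  have hr0 : rsum tail head s c v = 0 := by
    unfold rsum
    apply Finset.sum_eq_zero
    intro y _
    rw [hzero y]
    ring
  rw [hr0] at h6
  have : (σ₁ v : ℤ) = (σ₂ v : ℤ) := by linarith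
  exact_mod_cast this

private lemma recurrent_of_stabilize
    (hglobal : ∀ v : V,
      Relation.ReflTransGen (fun a b => ∃ e, tail e = a ∧ head e = b) v s)
    {c : Vne s → ℕ} (hc : ∀ v : Vne s, outdeg tail v.1 ≤ c v)
    {τ : Vne s → ℕ} (hst : StabilizesTo tail head c τ) : Recurrent tail head τ := by
  obtain ⟨lc, hlc, hlcf, hstab⟩ := hst
  refine ⟨hstab, ?_⟩
  intro ζ
  obtain ⟨ζ', lz, hlz, hlzf, hζstab⟩ := exists_stabilization tail head s hglobal ζ
  have hζ' : ∀ v, ζ' v ≤ c v := fun v => le_trans (le_of_lt (hζstab v)) (hc v)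
  refine ⟨fun v => c v - ζ' v, lz ++ lc, ?_, ?_⟩
  all_goals {
    have hadd := add_aux tail head s hlz (fun v => c v - ζ' v)
    have hmid : fireList tail head (fun v => ζ v + (c v - ζ' v)) lz = c := by
      rw [hadd.2]
      funext v
      rw [hlzf]
      have := hζ' v
      omega
    first
    | exact legal_append tail head s hadd.1 (by rw [hmid]; exact hlc)
    | rw [fireList_append, hmid, hlcf]
  }

private lemma recurrent_closed {σ₁ σ₂ τ : Vne s → ℕ} (h1 : Recurrent tail head σ₁)
    (h2 : Recurrent tail head σ₂)
    (hst : StabilizesTo tail head (fun v => σ₁ v + σ₂ v) τ) : Recurrent tail head τ := by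
  obtain ⟨l, hl, hlf, hstab⟩ := hst
  refine ⟨hstab, fun ζ => ?_⟩
  obtain ⟨β₁, l₁, hleg₁, hfl₁⟩ := h1.2 ζ
  have hconf : (fun v => ζ v + (β₁ v + σ₂ v)) = fun v => (ζ v + β₁ v) + σ₂ v := by
    funext v; ring
  have hadd := add_aux tail head s hleg₁ σ₂
  have hmid : fireList tail head (fun v => ζ v + (β₁ v + σ₂ v)) l₁
      = fun v => σ₁ v + σ₂ v := by
    rw [hconf, hadd.2]
    funext v
    rw [hfl₁]
  refine ⟨fun v => β₁ v + σ₂ v, l₁ ++ l, ?_, ?_⟩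
  · refine legal_append tail head s ?_ (by rw [hmid]; exact hl)
    rw [hconf]
    exact hadd.1
  · rw [fireList_append, hmid, hlf]

private lemma toClass_add (σ₁ σ₂ : Vne s → ℕ) :
    toClass tail head s (fun v => σ₁ v + σ₂ v)
      = toClass tail head s σ₁ + toClass tail head s σ₂ := by
  unfold toClass
  have h : (fun v => ((σ₁ v + σ₂ v : ℕ) : ℤ))
      = (fun v => (σ₁ v : ℤ)) + (fun v => (σ₂ v : ℤ)) := by
    funext v
    push_cast
    rfl
  rw [h]
  rfl

private lemma exists_recurrent_class
    (hglobal : ∀ v : V,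
      Relation.ReflTransGen (fun a b => ∃ e, tail e = a ∧ head e = b) v s)
    (x : Vne s → ℤ) :
    ∃ τ : Vne s → ℕ, Recurrent tail head τ ∧
      toClass tail head s τ = Submodule.Quotient.mk x := by
  set N : ℕ := Finset.univ.sup (fun v : Vne s => outdeg tail v.1) + 1 with hN
  obtain ⟨τ₀, l₀, hl₀, hl₀f, hτ₀⟩ := exists_stabilization tail head s hglobal (fun _ => N)
  set p : Vne s → ℕ := fun v => N - τ₀ v with hp
  have hτ₀N : ∀ v, τ₀ v < N := by
    intro v
    rw [hN]
    have hle : outdeg tail v.1 ≤ Finset.univ.sup (fun v : Vne s => outdeg tail v.1) :=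
      Finset.le_sup (f := fun v : Vne s => outdeg tail v.1) (Finset.mem_univ v)
    have := hτ₀ v
    omega
  have hp1 : ∀ v, 1 ≤ p v := by
    intro v
    have := hτ₀N v
    simp only [hp]
    omega
  have hpz : ∀ v, (p v : ℤ) = rsum tail head s (fun y => (l₀.count y : ℤ)) v := by
    intro v
    have h1 := fireList_int tail head s hl₀ v
    rw [hl₀f] at h1
    simp only [hp]
    push_cast [Nat.cast_sub (le_of_lt (hτ₀N v))]
    rw [hN] at h1
    push_cast at h1
    linarith
  set k : ℕ := Finset.univ.sup (fun v : Vne s => outdeg tail v.1 + (-(x v)).toNat) with hk2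
  have hkx : ∀ v : Vne s, (outdeg tail v.1 : ℤ) ≤ x v + (k : ℤ) * (p v : ℤ) := by
    intro v
    have ha : outdeg tail v.1 + (-(x v)).toNat ≤ k := by
      rw [hk2]; exact Finset.le_sup (f := fun v : Vne s => outdeg tail v.1 + (-(x v)).toNat) (Finset.mem_univ v)
    have hb : -(x v) ≤ ((-(x v)).toNat : ℤ) := Int.self_le_toNat _
    have h3 : (1:ℤ) ≤ (p v : ℤ) := by exact_mod_cast hp1 v
    have hk0 : (0:ℤ) ≤ (k:ℤ) := Int.ofNat_nonneg _
    have h4 : (k:ℤ) * 1 ≤ (k:ℤ) * (p v : ℤ) := mul_le_mul_of_nonneg_left h3 hk0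
    have h5 : ((outdeg tail v.1 : ℕ):ℤ) + (((-(x v)).toNat : ℕ):ℤ) ≤ (k:ℤ) := by
      exact_mod_cast ha
    linarith
  set cfg : Vne s → ℕ := fun v => (x v + (k : ℤ) * (p v : ℤ)).toNat with hcfg
  have hcfgz : ∀ v, (cfg v : ℤ) = x v + (k : ℤ) * (p v : ℤ) := by
    intro v
    simp only [hcfg]
    exact Int.toNat_of_nonneg (le_trans (Int.ofNat_nonneg _) (hkx v))
  have hcfgd : ∀ v : Vne s, outdeg tail v.1 ≤ cfg v := by
    intro v
    have : ((outdeg tail v.1 : ℕ) : ℤ) ≤ (cfg v : ℤ) := by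
      rw [hcfgz v]; exact hkx v
    exact_mod_cast this
  obtain ⟨τ, hτst⟩ := exists_stabilization tail head s hglobal cfg
  refine ⟨τ, recurrent_of_stabilize tail head s hglobal hcfgd hτst, ?_⟩
  obtain ⟨lτ, hlτ, hlτf, _⟩ := hτst
  have hcl : toClass tail head s τ = toClass tail head s cfg := by
    rw [← hlτf]
    exact toClass_eq_of_legal tail head s hlτ
  rw [hcl]
  unfold toClass
  rw [Submodule.Quotient.eq]
  have hdiff : (fun v => (cfg v : ℤ)) - x
      = rsum tail head s (fun y => (k : ℤ) * (l₀.count y : ℤ)) := by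
    funext v
    simp only [Pi.sub_apply]
    rw [hcfgz v, hpz v]
    unfold rsum
    rw [Finset.mul_sum]
    have : ∀ y ∈ Finset.univ, (k:ℤ) * ((l₀.count y : ℤ) * reducedLaplacian tail head s y v)
        = (k:ℤ) * (l₀.count y : ℤ) * reducedLaplacian tail head s y v := by
      intro y _; ring
    rw [Finset.sum_congr rfl this]
    ring
  rw [hdiff]
  exact rsum_mem_rowSpan tail head s _

end Aux

/-- **The group of recurrent configurations.**  For a digraph with a global sink:
the set of recurrent chip configurations is closed under the operation
`(σ₁, σ₂) ↦ (σ₁ + σ₂)°`; the map sending a recurrent configuration to its equivalence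
class modulo the reduced Laplacian is a bijection onto the sandpile group
`ℤ^{n-1}/ℤ^{n-1}Δ'(G)`; and this map carries the operation `(σ₁, σ₂) ↦ (σ₁ + σ₂)°`
to addition in the sandpile group.  Hence the recurrent configurations form an
abelian group isomorphic to `S(G)` via this map. -/
theorem recurrent_configurations_group
    {V E : Type} [Fintype V] [DecidableEq V] [Fintype E]
    (tail head : E → V)
    (s : V) (hs : outdeg tail s = 0)
    (hglobal : ∀ v : V,
      Relation.ReflTransGen (fun a b => ∃ e, tail e = a ∧ head e = b) v s) :
    (∀ σ₁ σ₂ τ : Vne s → ℕ, Recurrent tail head σ₁ → Recurrent tail head σ₂ →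
        StabilizesTo tail head (fun v => σ₁ v + σ₂ v) τ → Recurrent tail head τ) ∧
    Function.Bijective
      (fun σ : {σ : Vne s → ℕ // Recurrent tail head σ} => toClass tail head s σ.1) ∧
    (∀ σ₁ σ₂ τ : Vne s → ℕ, Recurrent tail head σ₁ → Recurrent tail head σ₂ →
        StabilizesTo tail head (fun v => σ₁ v + σ₂ v) τ →
        toClass tail head s τ = toClass tail head s σ₁ + toClass tail head s σ₂) := by
  refine ⟨?_, ⟨?_, ?_⟩, ?_⟩
  · intro σ₁ σ₂ τ h1 h2 hst
    exact recurrent_closed tail head s h1 h2 hst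
  · intro a b hab
    exact Subtype.ext (recurrent_inj tail head s a.2 b.2 hab)
  · intro y
    obtain ⟨x, rfl⟩ := Submodule.Quotient.mk_surjective _ y
    obtain ⟨τ, hτ, hcl⟩ := exists_recurrent_class tail head s hglobal x
    exact ⟨⟨τ, hτ⟩, hcl⟩
  · intro σ₁ σ₂ τ h1 h2 hst
    obtain ⟨l, hl, hlf, _⟩ := hst
    rw [← toClass_add tail head s σ₁ σ₂, ← hlf]
    exact toClass_eq_of_legal tail head s hl
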